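/- Let G be a finite abelian group of exponent m, and let B ⊆ G be a generating subset. Then the (m−1)-fold sumset of B* equals G, i.e., (m−1)B* = G. -/

import Mathlib

open Finset Pointwise

/-- The subset-sum set of a finite set `B`: all sums `∑_{a ∈ A} a` over `A ⊆ B`. -/
def subsetSums {G : Type*} [AddCommMonoid G] [DecidableEq G] (B : Finset G) : Finset G :=
  B.powerset.image fun A => A.sum id

private lemma nsmul_mod_exp {G : Type*} [AddCommGroup G] (m : ℕ)
    (hm : AddMonoid.exponent G = m) (n : ℕ) (b : G) : n • b = (n % m) • b := by
  have h0 : m • b = 0 := by rw [← hm]; exact AddMonoid.exponent_nsmul_eq_zero b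
  conv_lhs => rw [← Nat.div_add_mod n m]
  rw [add_nsmul, mul_nsmul, h0, smul_zero, zero_add]

private lemma rep_lemma {G : Type*} [AddCommGroup G] [Fintype G] [DecidableEq G] (m : ℕ)
    (hm : AddMonoid.exponent G = m) (hm0 : 0 < m)
    (B : Finset G) (hB : AddSubgroup.closure (B : Set G) = ⊤) (g : G) :
    ∃ c : G → ℕ, (∀ b, c b < m) ∧ g = ∑ b ∈ B, c b • b := by
  have hg : g ∈ AddSubgroup.closure (B : Set G) := by rw [hB]; trivial
  induction hg using AddSubgroup.closure_induction with
  | mem b hb =>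
    have hbound : ∀ x : G, (if x = b then 1 % m else 0) < m := by
      intro x; split
      · exact Nat.mod_lt _ hm0
      · exact hm0
    refine ⟨fun x => if x = b then 1 % m else 0, hbound, ?_⟩
    simp only [ite_smul, zero_smul]
    rw [Finset.sum_ite_eq' B b (fun x => (1 % m) • x)]
    rw [if_pos (Finset.mem_coe.mp hb)]
    rw [← nsmul_mod_exp m hm 1 b, one_nsmul]
  | zero => exact ⟨fun _ => 0, fun _ => hm0, by simp⟩
  | add x y hx hy ihx ihy =>
    obtain ⟨c, hc, hcx⟩ := ihx
    obtain ⟨d, hd, hdy⟩ := ihy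
    refine ⟨fun b => (c b + d b) % m, fun b => Nat.mod_lt _ hm0, ?_⟩
    rw [hcx, hdy, ← Finset.sum_add_distrib]
    refine Finset.sum_congr rfl fun b _ => ?_
    rw [← nsmul_mod_exp m hm, add_nsmul]
  | neg x hx ihx =>
    obtain ⟨c, hc, hcx⟩ := ihx
    refine ⟨fun b => (m - c b) % m, fun b => Nat.mod_lt _ hm0, ?_⟩
    rw [hcx, ← Finset.sum_neg_distrib]
    refine Finset.sum_congr rfl fun b _ => ?_
    rw [← nsmul_mod_exp m hm]
    have h : (m - c b) • b + c b • b = 0 := by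
      rw [← add_nsmul, Nat.sub_add_cancel (hc b).le, ← hm]
      exact AddMonoid.exponent_nsmul_eq_zero b
    rw [neg_eq_iff_add_eq_zero, add_comm]
    exact h

private lemma fold_lemma {G : Type*} [AddCommGroup G] [Fintype G] [DecidableEq G]
    (B : Finset G) :
    ∀ (k : ℕ) (c : G → ℕ), (∀ b, c b ≤ k) →
      (∑ b ∈ B, c b • b) ∈ ∑ _i : Fin k, subsetSums B := by
  intro k
  induction k with
  | zero =>
    intro c hc
    have : ∀ b, c b = 0 := fun b => Nat.le_zero.mp (hc b)
    simp [this]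
  | succ k ih =>
    intro c hc
    have key : ∑ b ∈ B, c b • b =
        (B.filter (fun b => k + 1 ≤ c b)).sum id + ∑ b ∈ B, (min (c b) k) • b := by
      rw [← Finset.sum_filter_add_sum_filter_not B (fun b => k + 1 ≤ c b)
        (fun b => min (c b) k • b),
        ← Finset.sum_filter_add_sum_filter_not B (fun b => k + 1 ≤ c b) (fun b => c b • b),
        ← add_assoc, ← Finset.sum_add_distrib]
      congr 1
      · refine Finset.sum_congr rfl fun b hb => ?_
        have h1 : c b = k + 1 := le_antisymm (hc b) (Finset.mem_filter.mp hb).2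
        have h2 : min (c b) k = k := by omega
        rw [h2, h1, id, succ_nsmul, add_comm]
      · refine Finset.sum_congr rfl fun b hb => ?_
        have h1 : c b ≤ k := by
          have := (Finset.mem_filter.mp hb).2
          omega
        rw [min_eq_left h1]
    rw [key, Fin.sum_univ_succ]
    refine Finset.add_mem_add ?_ (ih _ fun b => min_le_right _ _)
    exact Finset.mem_image.mpr ⟨_, Finset.mem_powerset.mpr (Finset.filter_subset _ _), rfl⟩

theorem stmt3 {G : Type*} [AddCommGroup G] [Fintype G] [DecidableEq G]
    (m : ℕ) (hm : AddMonoid.exponent G = m)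
    (B : Finset G) (hB : AddSubgroup.closure (B : Set G) = ⊤) :
    (∑ _i : Fin (m - 1), subsetSums B) = Finset.univ := by
  have hm0 : 0 < m := hm ▸ (AddMonoid.ExponentExists.of_finite).exponent_pos
  apply Finset.eq_univ_of_forall
  intro g
  obtain ⟨c, hc, hgc⟩ := rep_lemma m hm hm0 B hB g
  rw [hgc]
  exact fold_lemma B (m - 1) c fun b => Nat.le_sub_one_of_lt (hc b)
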